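/- arXiv:1912.12001 — 2 statements merged into one kernel-verified Lean document; each statement's English description precedes it below -/
import Mathlib

section
/- Let α, τ, η, β be real numbers with α ≥ 2, τ > 0, η > 0, β > 0, and suppose: log(1+η) ≤ τ, α·(2^(α−1) − 1)/(τ·(α−1)) > 1, and β − 1/η > α·(2^(α−1) − 1)/(τ·(α−1)). Then for every real y ≥ 1/η at which the first derivative of g vanishes (deriv g y = 0), the second derivative of g is strictly positive (deriv (deriv g) y > 0). -/
open Real Filter Topology

noncomputable def Lf (τ : ℝ) (y : ℝ) : ℝ := τ + Real.log (1 + 1 / y)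

noncomputable def D1 (α τ η β : ℝ) (y : ℝ) : ℝ :=
  (Lf τ y ^ (1 - α) - τ ^ (1 - α)) / ((1 - α) * β)
    - (y + β - 1 / η) * Lf τ y ^ (-α) / (β * (y ^ 2 + y))

noncomputable def D2 (α τ η β : ℝ) (y : ℝ) : ℝ :=
  Lf τ y ^ (-α) / (β * (y ^ 2 + y) ^ 2) *
    (-(2 * (y ^ 2 + y)) + (y + β - 1 / η) * ((2 * y + 1) - α / Lf τ y))

lemma Lf_pos {τ y : ℝ} (hτ : 0 < τ) (hy : 0 < y) : 0 < Lf τ y := by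
  have : (0:ℝ) ≤ Real.log (1 + 1 / y) := Real.log_nonneg (by nlinarith [one_div_pos.mpr hy])
  unfold Lf; linarith

lemma hasDerivAt_Lf {τ : ℝ} {y : ℝ} (hy : 0 < y) :
    HasDerivAt (Lf τ) (-(1 / (y ^ 2 + y))) y := by
  have h0 : (1 : ℝ) + 1 / y ≠ 0 := by positivity
  have h1 : HasDerivAt (fun z : ℝ => 1 + 1 / z) (-(y ^ 2)⁻¹) y := by
    simpa [one_div] using (hasDerivAt_inv hy.ne').const_add 1
  have h2 := (h1.log h0).const_add τ
  refine h2.congr_deriv (Eq.symm ?_)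
  field_simp

/-- The function `g` from the paper (change of variables `y = (x−1)β + 1/η`):
`g(y) = (y/β + 1 − 1/(ηβ))·(τ + log(1 + 1/y))^(1−α)/(1−α) − (y/β − 1/(ηβ))·τ^(1−α)/(1−α)`. -/
noncomputable def g (α τ η β : ℝ) : ℝ → ℝ := fun y =>
  (y / β + 1 - 1 / (η * β)) * (τ + Real.log (1 + 1 / y)) ^ (1 - α) / (1 - α)
    - (y / β - 1 / (η * β)) * τ ^ (1 - α) / (1 - α)

lemma hasDerivAt_g {α τ η β y : ℝ} (hα : α ≠ 1) (hτ : 0 < τ) (hη : 0 < η) (hβ : 0 < β)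
    (hy : 0 < y) : HasDerivAt (g α τ η β) (D1 α τ η β y) y := by
  have hL : 0 < Lf τ y := Lf_pos hτ hy
  have hs : (0:ℝ) < y ^ 2 + y := by positivity
  have hA : HasDerivAt (fun z : ℝ => z / β + 1 - 1 / (η * β)) (1 / β) y := by
    simpa using (((hasDerivAt_id y).div_const β).add_const 1).sub_const (1 / (η * β))
  have hB : HasDerivAt (fun z : ℝ => (τ + Real.log (1 + 1 / z)) ^ (1 - α))
      ((-(1 / (y ^ 2 + y))) * (1 - α) * Lf τ y ^ (1 - α - 1)) y := by
    simpa [Lf] using (hasDerivAt_Lf (τ := τ) hy).rpow_const (Or.inl hL.ne') (p := 1 - α)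
  have hC : HasDerivAt (fun z : ℝ => z / β - 1 / (η * β)) (1 / β) y := by
    simpa using ((hasDerivAt_id y).div_const β).sub_const (1 / (η * β))
  have htot := ((hA.mul hB).div_const (1 - α)).sub ((hC.mul_const (τ ^ (1 - α))).div_const (1 - α))
  refine htot.congr_deriv (Eq.symm ?_)
  have he : (1 : ℝ) - α - 1 = -α := by ring
  have hfold : τ + Real.log (1 + 1 / y) = Lf τ y := rfl
  rw [he, hfold]
  unfold D1
  set L := Lf τ y with hLdef
  have hLE : L ^ (1 - α) = L ^ (-α) * L := by
    rw [show (1:ℝ) - α = -α + 1 by ring, Real.rpow_add hL, Real.rpow_one]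
  rw [hLE]
  set E := L ^ (-α) with hEdef
  have h1a : (1:ℝ) - α ≠ 0 := fun h => hα (by linarith)
  have hs' : y ^ 2 + y ≠ 0 := hs.ne'
  field_simp
  ring

lemma hasDerivAt_D1 {α τ η β y : ℝ} (hα : α ≠ 1) (hτ : 0 < τ) (hη : 0 < η) (hβ : 0 < β)
    (hy : 0 < y) : HasDerivAt (D1 α τ η β) (D2 α τ η β y) y := by
  have hL : 0 < Lf τ y := Lf_pos hτ hy
  have hs : (0:ℝ) < y ^ 2 + y := by positivity
  have hB1 : HasDerivAt (fun z : ℝ => Lf τ z ^ (1 - α))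
      ((-(1 / (y ^ 2 + y))) * (1 - α) * Lf τ y ^ (1 - α - 1)) y :=
    (hasDerivAt_Lf hy).rpow_const (Or.inl hL.ne') (p := 1 - α)
  have hE0 : HasDerivAt (fun z : ℝ => Lf τ z ^ (-α))
      ((-(1 / (y ^ 2 + y))) * (-α) * Lf τ y ^ (-α - 1)) y :=
    (hasDerivAt_Lf hy).rpow_const (Or.inl hL.ne') (p := -α)
  have hP : HasDerivAt (fun z : ℝ => z + β - 1 / η) 1 y := by
    simpa using ((hasDerivAt_id y).add_const β).sub_const (1 / η)
  have hsd : HasDerivAt (fun z : ℝ => β * (z ^ 2 + z)) (β * (2 * y + 1)) y := by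
    have := ((hasDerivAt_pow 2 y).add (hasDerivAt_id y)).const_mul β
    simpa using this.congr_deriv (by ring)
  have hN := hP.mul hE0
  have htot := ((hB1.sub_const (τ ^ (1 - α))).div_const ((1 - α) * β)).sub
    (hN.div hsd (by positivity))
  refine htot.congr_deriv (Eq.symm ?_)
  have he : (1 : ℝ) - α - 1 = -α := by ring
  rw [he]
  simp only [Pi.mul_apply]
  unfold D2
  set L := Lf τ y with hLdef
  have hLE2 : L ^ (-α - 1) = L ^ (-α) / L := by
    rw [show -α - 1 = -α + (-1) by ring, Real.rpow_add hL, Real.rpow_neg_one]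
    ring
  rw [hLE2]
  set E := L ^ (-α) with hEdef
  have h1a : (1:ℝ) - α ≠ 0 := fun h => hα (by linarith)
  have hs' : y ^ 2 + y ≠ 0 := hs.ne'
  field_simp
  ring

set_option maxHeartbeats 1000000 in
/-- for α ≥ 2 with log(1+η) ≤ τ, α(2^(α−1)−1)/(τ(α−1)) > 1 and
β − 1/η > α(2^(α−1)−1)/(τ(α−1)), at every y ≥ 1/η where g′(y) = 0 we have g″(y) > 0. -/
theorem stmt_7 (α τ η β : ℝ) (hα : 2 ≤ α)
    (hτ : 0 < τ) (hη : 0 < η) (hβ : 0 < β)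
    (h1 : Real.log (1 + η) ≤ τ)
    (h2 : α * (2 ^ (α - 1) - 1) / (τ * (α - 1)) > 1)
    (h3 : β - 1 / η > α * (2 ^ (α - 1) - 1) / (τ * (α - 1))) :
    ∀ y : ℝ, 1 / η ≤ y → deriv (g α τ η β) y = 0 →
      0 < deriv (deriv (g α τ η β)) y := by
  intro y hy1 hcrit0
  have hy : 0 < y := lt_of_lt_of_le (by positivity) hy1
  have hα1 : α ≠ 1 := by intro h; rw [h] at hα; linarith
  have hq0 : 0 < α - 1 := by linarith
  have hL : 0 < Lf τ y := Lf_pos hτ hy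
  have hs : (0:ℝ) < y ^ 2 + y := by positivity
  -- rewrite derivatives
  have hev : deriv (g α τ η β) =ᶠ[𝓝 y] D1 α τ η β := by
    filter_upwards [Ioi_mem_nhds hy] with z hz
    exact (hasDerivAt_g hα1 hτ hη hβ hz).deriv
  rw [hev.deriv_eq, (hasDerivAt_D1 hα1 hτ hη hβ hy).deriv]
  have hcrit : D1 α τ η β y = 0 := by
    rw [← (hasDerivAt_g hα1 hτ hη hβ hy).deriv]; exact hcrit0
  -- notation
  set L := Lf τ y with hLdef
  set E := L ^ (-α) with hEdef
  have hEpos : 0 < E := Real.rpow_pos_of_pos hL _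
  set s := y ^ 2 + y with hsdef
  set P := y + β - 1 / η with hPdef
  set M := α * (2 ^ (α - 1) - 1) / (τ * (α - 1)) with hMdef
  set R := (L / τ) ^ (α - 1) with hRdef
  -- key identity from the critical point
  have hLE : L ^ (1 - α) = E * L := by
    rw [hEdef, show (1:ℝ) - α = -α + 1 by ring, Real.rpow_add hL, Real.rpow_one]
  have hTR : τ ^ (1 - α) = R * E * L := by
    have h5 : L ^ (α - 1) * (L ^ (-α) * L) = 1 := by
      rw [← Real.rpow_add_one hL.ne', ← Real.rpow_add hL,
        show α - 1 + (-α + 1) = 0 by ring, Real.rpow_zero]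
    have hτq : (0:ℝ) < τ ^ (α - 1) := Real.rpow_pos_of_pos hτ _
    rw [hRdef, Real.div_rpow hL.le hτ.le, hEdef,
      show (1:ℝ) - α = -(α - 1) by ring, Real.rpow_neg hτ.le]
    field_simp
    nlinarith [h5]
  have key : P * (α - 1) = s * L * (R - 1) := by
    have hc : (E * L - R * E * L) / ((1 - α) * β) - P * E / (β * s) = 0 := by
      rw [← hLE, ← hTR]; exact hcrit
    have h1a : (1:ℝ) - α ≠ 0 := fun h => hα1 (by linarith)
    field_simp at hc
    have h6' : β * (E * (P * (α - 1))) = β * (E * (s * L * (R - 1))) := by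
      linear_combination β * hc
    have h6 := mul_left_cancel₀ hβ.ne' h6'
    exact mul_left_cancel₀ hEpos.ne' h6
  -- basic bounds on L
  have hlt : 0 < Real.log (1 + 1 / y) := Real.log_pos (by nlinarith [one_div_pos.mpr hy])
  have hlogy : Real.log (1 + 1 / y) ≤ 1 / y := by
    have := Real.log_le_sub_one_of_pos (show (0:ℝ) < 1 + 1 / y by positivity)
    linarith
  have hinvy : 1 / y ≤ η := by
    rw [div_le_iff₀ hy]
    have := (div_le_iff₀ hη).mp hy1
    nlinarith
  have hlogτ : Real.log (1 + 1 / y) ≤ τ := by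
    refine le_trans ?_ h1
    exact Real.log_le_log (by positivity) (by linarith)
  have hLτ : τ < L := by rw [hLdef]; unfold Lf; linarith
  have hL2τ : L ≤ 2 * τ := by rw [hLdef]; unfold Lf; linarith
  -- convexity bound : R - 1 ≤ (L/τ - 1) * (2^(α-1) - 1)
  have ht1 : 1 < L / τ := (one_lt_div hτ).mpr hLτ
  have ht2 : L / τ ≤ 2 := by rw [div_le_iff₀ hτ]; linarith
  have hcx := (convexOn_rpow (p := α - 1) (by linarith)).2
    (Set.mem_Ici.mpr zero_le_one) (Set.mem_Ici.mpr (by norm_num : (0:ℝ) ≤ 2))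
    (show (0:ℝ) ≤ 2 - L / τ by linarith) (show (0:ℝ) ≤ L / τ - 1 by linarith)
    (show (2 - L / τ) + (L / τ - 1) = 1 by ring)
  have hRub : R ≤ 1 + (L / τ - 1) * (2 ^ (α - 1) - 1) := by
    have h1r : (1:ℝ) ^ (α - 1) = 1 := Real.one_rpow _
    rw [hRdef]
    have : ((2 - L / τ) • (1:ℝ) + (L / τ - 1) • (2:ℝ)) = L / τ := by
      simp [smul_eq_mul]; ring
    rw [this] at hcx
    simp only [smul_eq_mul, h1r] at hcx
    linarith
  -- derive P * α ≤ (y+1) * L * M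
  have h2q : (2:ℝ) ≤ 2 ^ (α - 1) := by
    have : (2:ℝ) ^ (1:ℝ) ≤ 2 ^ (α - 1) := by
      rw [Real.rpow_le_rpow_left_iff one_lt_two]; linarith
    rwa [Real.rpow_one] at this
  have hM1 : 1 < M := h2
  have hMa : M * (τ * (α - 1)) = α * (2 ^ (α - 1) - 1) := by
    rw [hMdef]; field_simp
  have hsy : s * (1 / y) = y + 1 := by rw [hsdef]; field_simp
  have hPub : P * α ≤ (y + 1) * L * M := by
    have hb1 : s * L * (R - 1) ≤ s * L * ((L / τ - 1) * (2 ^ (α - 1) - 1)) := by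
      have h0 : (0:ℝ) ≤ s * L := by positivity
      exact mul_le_mul_of_nonneg_left (by linarith) h0
    have hb2 : s * (L / τ - 1) ≤ (y + 1) / τ := by
      have hLt : L - τ ≤ 1 / y := by rw [hLdef]; unfold Lf; linarith
      have h8 : s * (L - τ) ≤ y + 1 := by
        nlinarith [mul_le_mul_of_nonneg_left hLt hs.le, hsy]
      have h9 : L / τ - 1 = (L - τ) / τ := by field_simp
      rw [h9, ← mul_div_assoc]
      exact (div_le_div_iff_of_pos_right hτ).mpr h8
    -- P * (α-1) ≤ (y+1) * L * (2^(α-1)-1) / τ = (y+1) * L * M * (α-1) / α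
    have hb3 : P * (α - 1) ≤ (y + 1) / τ * L * (2 ^ (α - 1) - 1) := by
      rw [key]
      calc s * L * (R - 1) ≤ s * L * ((L / τ - 1) * (2 ^ (α - 1) - 1)) := hb1
        _ = (s * (L / τ - 1)) * L * (2 ^ (α - 1) - 1) := by ring
        _ ≤ (y + 1) / τ * L * (2 ^ (α - 1) - 1) :=
            mul_le_mul_of_nonneg_right (mul_le_mul_of_nonneg_right hb2 hL.le) (by linarith)
    have hcalc : (y + 1) / τ * L * (2 ^ (α - 1) - 1) * α = (y + 1) * L * M * (α - 1) := by
      rw [hMdef]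
      field_simp
    have h10 : P * α * (α - 1) ≤ (y + 1) * L * M * (α - 1) := by
      calc P * α * (α - 1) = P * (α - 1) * α := by ring
        _ ≤ (y + 1) / τ * L * (2 ^ (α - 1) - 1) * α :=
            mul_le_mul_of_nonneg_right hb3 (by linarith)
        _ = (y + 1) * L * M * (α - 1) := hcalc
    exact le_of_mul_le_mul_right h10 hq0
  have hPgt : y + M < P := by rw [hPdef]; linarith
  have hPαL : P * α / L ≤ (y + 1) * M := by
    rw [div_le_iff₀ hL]
    have : α * (y + M) < (y + 1) * L * M := by nlinarith
    nlinarith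
  -- final positivity
  have hF : 0 < -(2 * s) + P * ((2 * y + 1) - α / L) := by
    have hPdiv : P * (α / L) = P * α / L := by ring
    have h7 : (y + M) * (2 * y + 1) < P * (2 * y + 1) :=
      mul_lt_mul_of_pos_right hPgt (by linarith)
    nlinarith [hPαL, h7, hM1, hy]
  have hpos1 : 0 < E / (β * s ^ 2) := by positivity
  calc (0:ℝ) < E / (β * s ^ 2) * (-(2 * s) + P * ((2 * y + 1) - α / L)) :=
        mul_pos hpos1 hF
    _ = D2 α τ η β y := by rw [D2]
end

section
/- Let τ, η, β be real numbers with η > 0, 0 < τ < 1, and β ≥ 1/τ + 1/η. Then for every real y ≥ 1/η at which the first derivative of g₁ vanishes (deriv g₁ y = 0), the second derivative of g₁ is strictly positive (deriv (deriv g₁) y > 0). -/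
open Real Filter

/-- The function `g₁` from the paper:
`g₁(y) = (y/β + 1 − 1/(ηβ))·log(τ + log(1 + 1/y)) − (y/β − 1/(ηβ))·log τ`. -/
noncomputable def g₁ (τ η β : ℝ) : ℝ → ℝ := fun y =>
  (y / β + 1 - 1 / (η * β)) * Real.log (τ + Real.log (1 + 1 / y))
    - (y / β - 1 / (η * β)) * Real.log τ

lemma key_log {u : ℝ} (hu : 0 < u) : 2*u/(2+u) < Real.log (1+u) := by
  have hmono : StrictMonoOn (fun x : ℝ => Real.log (1+x) - 2*x/(2+x)) (Set.Ici 0) := by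
    apply strictMonoOn_of_deriv_pos (convex_Ici 0)
    · apply ContinuousOn.sub
      · apply ContinuousOn.log (by fun_prop)
        intro x hx
        simp only [Set.mem_Ici] at hx
        positivity
      · apply ContinuousOn.div (by fun_prop) (by fun_prop)
        intro x hx
        simp only [Set.mem_Ici] at hx
        positivity
    · intro x hx
      rw [interior_Ici, Set.mem_Ioi] at hx
      have h1 : (0:ℝ) < 1 + x := by linarith
      have h2 : (0:ℝ) < 2 + x := by linarith
      have hd1 : HasDerivAt (fun x : ℝ => Real.log (1+x)) (1/(1+x)) x := by
        simpa using ((hasDerivAt_id x).const_add 1).log h1.ne'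
      have hd2 : HasDerivAt (fun x : ℝ => 2*x/(2+x)) (4/(2+x)^2) x := by
        have := ((hasDerivAt_id x).const_mul 2).div ((hasDerivAt_id x).const_add 2) h2.ne'
        refine this.congr_deriv (Eq.symm ?_)
        simp only [id]
        field_simp
        ring
      rw [(show HasDerivAt (fun x : ℝ => Real.log (1+x) - 2*x/(2+x)) _ x from hd1.sub hd2).deriv]
      have : 1/(1+x) - 4/(2+x)^2 = x^2/((1+x)*(2+x)^2) := by
        field_simp
        ring
      rw [this]
      positivity
  have h0 : (0:ℝ) ∈ Set.Ici (0:ℝ) := Set.self_mem_Ici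
  have := hmono h0 (Set.mem_Ici.2 hu.le) hu
  simp only [Real.log_one, mul_zero, zero_div, sub_zero, add_zero, mul_zero] at this
  norm_num at this
  linarith

/-- Explicit first derivative of `g₁` on `(0, ∞)`. -/
noncomputable def g1d (τ η β : ℝ) : ℝ → ℝ := fun y =>
  (Real.log (τ + Real.log (1 + 1 / y)) - Real.log τ) / β
    - (y / β + 1 - 1 / (η * β)) / ((y^2 + y) * (τ + Real.log (1 + 1 / y)))

/-- Explicit second derivative of `g₁` on `(0, ∞)`. -/
noncomputable def g1dd (τ η β : ℝ) : ℝ → ℝ := fun y =>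
  ((y / β + 1 - 1 / (η * β)) * ((2*y+1) * (τ + Real.log (1 + 1 / y)) - 1)
      - 2 * (y^2 + y) * (τ + Real.log (1 + 1 / y)) / β)
    / ((y^2 + y)^2 * (τ + Real.log (1 + 1 / y))^2)

section derivs

variable {τ η β y : ℝ}

lemma basic_facts (hτ : 0 < τ) (hy : 0 < y) :
    0 < Real.log (1 + 1/y) ∧ 0 < τ + Real.log (1 + 1/y) ∧ 0 < y^2 + y := by
  have h1 : (1:ℝ) < 1 + 1/y := by
    have : 0 < 1/y := by positivity
    linarith
  have hL : 0 < Real.log (1 + 1/y) := Real.log_pos h1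
  exact ⟨hL, by linarith, by positivity⟩

lemma hasDerivAt_F (hτ : 0 < τ) (hy : 0 < y) :
    HasDerivAt (fun y : ℝ => τ + Real.log (1 + 1/y)) (-((y^2+y)⁻¹)) y := by
  have h1 : HasDerivAt (fun y : ℝ => 1 + 1/y) (-(y^2)⁻¹) y := by
    simpa [one_div] using (hasDerivAt_inv hy.ne').const_add 1
  have h1' : (0:ℝ) < 1 + 1/y := by positivity
  have h2 : HasDerivAt (fun y : ℝ => Real.log (1 + 1/y)) ((-(y^2)⁻¹) / (1 + 1/y)) y :=
    h1.log h1'.ne'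
  have h3 := h2.const_add τ
  refine h3.congr_deriv (Eq.symm ?_)
  have hy' : y ≠ 0 := hy.ne'
  field_simp

lemma hasDerivAt_g1 (hτ : 0 < τ) (hβ : 0 < β) (hy : 0 < y) :
    HasDerivAt (g₁ τ η β) (g1d τ η β y) y := by
  obtain ⟨hL, hF, hyy⟩ := basic_facts hτ hy
  have hF' := hasDerivAt_F (τ := τ) hτ hy
  have hlogF : HasDerivAt (fun y : ℝ => Real.log (τ + Real.log (1 + 1/y)))
      ((-((y^2+y)⁻¹)) / (τ + Real.log (1 + 1/y))) y := hF'.log hF.ne'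
  have hA : HasDerivAt (fun y : ℝ => y / β + 1 - 1 / (η * β)) (1/β) y := by
    simpa using (((hasDerivAt_id y).div_const β).add_const 1).sub_const (1 / (η * β))
  have hB : HasDerivAt (fun y : ℝ => (y / β - 1 / (η * β)) * Real.log τ)
      ((1/β) * Real.log τ) y := by
    simpa using (((hasDerivAt_id y).div_const β).sub_const (1 / (η * β))).mul_const (Real.log τ)
  have h : HasDerivAt (fun y : ℝ => (y / β + 1 - 1 / (η * β)) * Real.log (τ + Real.log (1 + 1 / y))
      - (y / β - 1 / (η * β)) * Real.log τ) _ y := (hA.mul hlogF).sub hB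
  refine h.congr_deriv (Eq.symm ?_)
  show g1d τ η β y = _
  unfold g1d
  have hy' : y ≠ 0 := hy.ne'
  set L := Real.log (1 + 1/y) with hLdef
  field_simp
  ring

lemma hasDerivAt_g1d (hτ : 0 < τ) (hβ : 0 < β) (hy : 0 < y) :
    HasDerivAt (g1d τ η β) (g1dd τ η β y) y := by
  obtain ⟨hL, hF, hyy⟩ := basic_facts hτ hy
  have hF' := hasDerivAt_F (τ := τ) hτ hy
  have hlogF : HasDerivAt (fun y : ℝ => Real.log (τ + Real.log (1 + 1/y)))
      ((-((y^2+y)⁻¹)) / (τ + Real.log (1 + 1/y))) y := hF'.log hF.ne'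
  have hA : HasDerivAt (fun y : ℝ => y / β + 1 - 1 / (η * β)) (1/β) y := by
    simpa using (((hasDerivAt_id y).div_const β).add_const 1).sub_const (1 / (η * β))
  have hyy' : HasDerivAt (fun y : ℝ => y^2 + y) (2*y+1) y := by
    exact ((hasDerivAt_pow 2 y).add (hasDerivAt_id y)).congr_deriv (by simp)
  have hG : HasDerivAt (fun y : ℝ => (y^2 + y) * (τ + Real.log (1 + 1/y)))
      ((2*y+1) * (τ + Real.log (1 + 1/y)) + (y^2+y) * (-((y^2+y)⁻¹))) y := hyy'.mul hF'
  have hGne : (y^2 + y) * (τ + Real.log (1 + 1/y)) ≠ 0 := by positivity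
  have h1 := (hlogF.sub_const (Real.log τ)).div_const β
  have h2 := hA.div hG hGne
  have h : HasDerivAt (fun y : ℝ => (Real.log (τ + Real.log (1 + 1 / y)) - Real.log τ) / β
      - (y / β + 1 - 1 / (η * β)) / ((y^2 + y) * (τ + Real.log (1 + 1 / y)))) _ y := h1.sub h2
  refine h.congr_deriv (Eq.symm ?_)
  show g1dd τ η β y = _
  unfold g1dd
  have hy' : y ≠ 0 := hy.ne'
  set L := Real.log (1 + 1/y) with hLdef
  field_simp
  ring

end derivs

/-- for 0 < τ < 1, η > 0 and β ≥ 1/τ + 1/η,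
at every y ≥ 1/η where g₁′(y) = 0 we have g₁″(y) > 0. -/
theorem stmt_8 (τ η β : ℝ) (hη : 0 < η) (hτ0 : 0 < τ) (hτ1 : τ < 1)
    (hβ : β ≥ 1 / τ + 1 / η) :
    ∀ y : ℝ, 1 / η ≤ y → deriv (g₁ τ η β) y = 0 →
      0 < deriv (deriv (g₁ τ η β)) y := by
  intro y hy hcrit
  have hy0 : 0 < y := lt_of_lt_of_le (by positivity) hy
  have hβ0 : 0 < β := lt_of_lt_of_le (by positivity) hβ
  obtain ⟨hL, hF, hyy⟩ := basic_facts hτ0 hy0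
  have hev : deriv (g₁ τ η β) =ᶠ[nhds y] g1d τ η β := by
    filter_upwards [Ioi_mem_nhds hy0] with x hx
    exact (hasDerivAt_g1 hτ0 hβ0 hx).deriv
  rw [hev.deriv_eq, (hasDerivAt_g1d hτ0 hβ0 hy0).deriv]
  rw [(hasDerivAt_g1 hτ0 hβ0 hy0).deriv] at hcrit
  unfold g1d at hcrit
  unfold g1dd
  set L := Real.log (1 + 1/y) with hLdef
  set K := Real.log (τ + L) - Real.log τ with hKdef
  have hK : 0 < K := sub_pos.2 (Real.log_lt_log hτ0 (by linarith))
  -- bound 1 : L * (2y+1) > 2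
  have hL2 : 2 < L * (2*y+1) := by
    have h1 := key_log (u := 1/y) (by positivity)
    have h2 : 2*(1/y)/(2+1/y) = 2/(2*y+1) := by
      rw [div_eq_div_iff (by positivity) (by positivity)]
      field_simp
    rw [h2] at h1
    exact (div_lt_iff₀ (by positivity)).mp h1
  -- bound 2 : K * (2τ+L) > 2L
  have hK2 : 2*L < K * (2*τ+L) := by
    have h1 := key_log (u := L/τ) (by positivity)
    have h2 : (1:ℝ) + L/τ = (τ+L)/τ := by field_simp
    rw [h2, Real.log_div hF.ne' hτ0.ne'] at h1
    have h3 : 2*(L/τ)/(2+L/τ) = 2*L/(2*τ+L) := by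
      rw [div_eq_div_iff (by positivity) (by positivity)]
      field_simp
    rw [h3] at h1
    exact (div_lt_iff₀ (by positivity)).mp h1
  -- critical point relation
  have hA_eq : y/β + 1 - 1/(η*β) = (y^2+y)*(τ+L)*K/β := by
    have h2 : (y/β + 1 - 1/(η*β))/((y^2+y)*(τ+L)) = K/β := by linarith [hcrit]
    rw [div_eq_div_iff (by positivity) hβ0.ne'] at h2
    rw [eq_div_iff hβ0.ne']
    linear_combination h2
  -- main inequality
  have hP : 0 < (2*y+1)*(τ+L) - 1 := by nlinarith
  have hLP : 2*τ + L < L * ((2*y+1)*(τ+L) - 1) := by nlinarith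
  have hKP : 2 < K * ((2*y+1)*(τ+L) - 1) := by
    nlinarith [mul_lt_mul_of_pos_left hLP hK, hK2, hL]
  apply div_pos _ (by positivity)
  rw [hA_eq]
  have heq : (y^2+y)*(τ+L)*K/β * ((2*y+1)*(τ+L) - 1) - 2*(y^2+y)*(τ+L)/β
      = (y^2+y)*(τ+L)/β * (K * ((2*y+1)*(τ+L) - 1) - 2) := by ring
  rw [heq]
  exact mul_pos (by positivity) (by linarith)
end
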